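/- Let g⁻¹(x) = exp(exp(x^{1/4})) for x ≥ 0 (extended by g⁻¹(x)=e for x < 0 if needed). For every p ∈ (0,1), the sum Σ_{k=1}^∞ g⁻¹(k)·(1-p)^k is O(g⁻¹(p^{-2})); that is, there is an absolute constant C such that Σ_{k=1}^∞ g⁻¹(k)(1-p)^k ≤ C · g⁻¹(1/p²) for all p ∈ (0,1). -/

import Mathlib

/-- `ginv` is the inverse of `g(x) = exp((log log x)^4)`, namely
`ginv x = exp(exp((log x)^{1/4}))`. -/
noncomputable def ginv (x : ℝ) : ℝ := Real.exp (Real.exp ((Real.log x) ^ ((1 : ℝ) / 4)))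

open Real

private lemma rpow_quarter_pow {x : ℝ} (hx : 0 ≤ x) : (x ^ ((1:ℝ)/4)) ^ (4:ℕ) = x := by
  rw [← Real.rpow_natCast (x ^ ((1:ℝ)/4)) 4, ← Real.rpow_mul hx]
  norm_num

private lemma quarter_le {s : ℝ} (hs : 0 ≤ s) : s ^ ((1:ℝ)/4) ≤ 1 + s / 2 := by
  rcases le_or_gt s 1 with h | h
  · have h1 : s ^ ((1:ℝ)/4) ≤ 1 := Real.rpow_le_one hs h (by norm_num)
    linarith
  · have h1 : s ^ ((1:ℝ)/4) ≤ s ^ ((1:ℝ)/2) :=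
      Real.rpow_le_rpow_of_exponent_le h.le (by norm_num)
    have h2 : s ^ ((1:ℝ)/2) = Real.sqrt s := by
      rw [Real.sqrt_eq_rpow]
    have h3 : Real.sqrt s ≤ 1 + s/2 := by
      nlinarith [Real.sq_sqrt hs, Real.sqrt_nonneg s, sq_nonneg (Real.sqrt s - 1)]
    linarith

private lemma pow_one_sub_le {p : ℝ} (hp0 : 0 ≤ p) (hp1 : p ≤ 1) (k : ℕ) :
    (1-p)^(k+1) ≤ Real.exp (-(p*((k:ℝ)+1))) := by
  have h1 : (1-p) ≤ Real.exp (-p) := by linarith [Real.add_one_le_exp (-p)]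
  have h2 : (1-p)^(k+1) ≤ (Real.exp (-p))^(k+1) :=
    pow_le_pow_left₀ (by linarith) h1 _
  have h3 : (Real.exp (-p))^(k+1) = Real.exp (-(p*((k:ℝ)+1))) := by
    rw [← Real.exp_nat_mul]
    congr 1
    push_cast
    ring
  linarith [h2, h3.le, h3.ge]

set_option maxHeartbeats 1000000 in
private lemma crude (p : ℝ) (hp : 0 < p) (hp1 : p < 1) (k : ℕ) :
    ginv ((k:ℝ)+1) * (1-p)^(k+1) ≤
      Real.exp ((Real.exp 1)^2 / (2*p)) * (Real.exp (-(p/2)))^(k+1) := by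
  set t : ℝ := (k:ℝ)+1 with htdef
  have ht1 : (1:ℝ) ≤ t := by
    have : (0:ℝ) ≤ (k:ℝ) := Nat.cast_nonneg k
    simp only [htdef]; linarith
  have ht0 : (0:ℝ) < t := by linarith
  have hlog0 : 0 ≤ Real.log t := Real.log_nonneg ht1
  have hq : Real.log t ^ ((1:ℝ)/4) ≤ 1 + Real.log t / 2 := quarter_le hlog0
  have hexp1 : Real.exp (Real.log t ^ ((1:ℝ)/4)) ≤ Real.exp 1 * Real.sqrt t := by
    calc Real.exp (Real.log t ^ ((1:ℝ)/4)) ≤ Real.exp (1 + Real.log t / 2) :=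
          Real.exp_le_exp.2 hq
    _ = Real.exp 1 * Real.exp (Real.log t / 2) := Real.exp_add _ _
    _ = Real.exp 1 * Real.sqrt t := by
        rw [← Real.log_sqrt ht0.le, Real.exp_log (Real.sqrt_pos.2 ht0)]
  have hAM : Real.exp 1 * Real.sqrt t ≤ p/2 * t + (Real.exp 1)^2/(2*p) := by
    have key : 2*p*(Real.exp 1 * Real.sqrt t) ≤ p^2*t + (Real.exp 1)^2 := by
      nlinarith [sq_nonneg (p*Real.sqrt t - Real.exp 1), Real.sq_sqrt ht0.le]
    have h2p : (0:ℝ) < 2*p := by linarith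
    rw [show p/2*t + (Real.exp 1)^2/(2*p) = (p^2*t + (Real.exp 1)^2)/(2*p) by
      field_simp]
    rw [le_div_iff₀ h2p]
    nlinarith [key]
  have hginv : ginv t ≤ Real.exp (p/2*t + (Real.exp 1)^2/(2*p)) := by
    unfold ginv
    exact Real.exp_le_exp.2 (hexp1.trans hAM)
  have hpow : (1-p)^(k+1) ≤ Real.exp (-(p*t)) := pow_one_sub_le hp.le hp1.le k
  calc ginv t * (1-p)^(k+1)
      ≤ Real.exp (p/2*t + (Real.exp 1)^2/(2*p)) * Real.exp (-(p*t)) :=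
        mul_le_mul hginv hpow (pow_nonneg (by linarith) _) (Real.exp_nonneg _)
  _ = Real.exp ((Real.exp 1)^2 / (2*p)) * (Real.exp (-(p/2)))^(k+1) := by
      rw [← Real.exp_nat_mul (-(p/2)) (k+1), ← Real.exp_add, ← Real.exp_add]
      congr 1
      simp only [htdef]
      push_cast
      ring

set_option maxHeartbeats 1000000 in
private lemma KI {L : ℝ} (hL : (10:ℝ)^11 ≤ L) :
    Real.exp ((3/2*L) ^ ((1:ℝ)/4)) + 2*L ≤ Real.exp ((2*L) ^ ((1:ℝ)/4)) := by
  have hL0 : (0:ℝ) ≤ L := le_trans (by norm_num) hL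
  set v := L ^ ((1:ℝ)/4) with hvdef
  have hv0 : 0 ≤ v := Real.rpow_nonneg hL0 _
  have hv4 : v^(4:ℕ) = L := rpow_quarter_pow hL0
  have hv : (562:ℝ) ≤ v := by
    by_contra h
    push_neg at h
    have h2 : v^(4:ℕ) < (562:ℝ)^(4:ℕ) := pow_lt_pow_left₀ h hv0 (by norm_num)
    rw [hv4] at h2
    norm_num at h2
    linarith
  set a := ((3:ℝ)/2) ^ ((1:ℝ)/4) with hadef
  set b := (2:ℝ) ^ ((1:ℝ)/4) with hbdef
  have ha4 : a^(4:ℕ) = 3/2 := rpow_quarter_pow (by norm_num)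
  have hb4 : b^(4:ℕ) = 2 := rpow_quarter_pow (by norm_num)
  have ha0 : 0 ≤ a := Real.rpow_nonneg (by norm_num) _
  have hb0 : 0 ≤ b := Real.rpow_nonneg (by norm_num) _
  have ha1 : 1 ≤ a := by
    by_contra h
    push_neg at h
    have h2 : a^(4:ℕ) < (1:ℝ)^(4:ℕ) := pow_lt_pow_left₀ h ha0 (by norm_num)
    rw [ha4] at h2
    norm_num at h2
  have ha : a ≤ 1.11 := by
    by_contra h
    push_neg at h
    have h2 : (1.11:ℝ)^(4:ℕ) < a^(4:ℕ) := pow_lt_pow_left₀ h (by norm_num) (by norm_num)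
    rw [ha4] at h2
    norm_num at h2
  have hb : (1.18:ℝ) ≤ b := by
    by_contra h
    push_neg at h
    have h2 : b^(4:ℕ) < (1.18:ℝ)^(4:ℕ) := pow_lt_pow_left₀ h hb0 (by norm_num)
    rw [hb4] at h2
    norm_num at h2
  have hsplit : (2*L)^((1:ℝ)/4) = b * v := by
    rw [hbdef, hvdef, ← Real.mul_rpow (by norm_num) hL0]
  have hsplit2 : (3/2*L)^((1:ℝ)/4) = a * v := by
    rw [hadef, hvdef, ← Real.mul_rpow (by norm_num) hL0]
  rw [hsplit, hsplit2, ← hv4]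
  have e0 : (0:ℝ) < Real.exp (a*v) := Real.exp_pos _
  have h2 : 1 + (b-a)*v ≤ Real.exp ((b-a)*v) := by linarith [Real.add_one_le_exp ((b-a)*v)]
  have s1 : Real.exp (a*v) + (b-a)*v*Real.exp (a*v) ≤ Real.exp (b*v) := by
    have h1 : Real.exp (b*v) = Real.exp (a*v) * Real.exp ((b-a)*v) := by
      rw [← Real.exp_add]; ring_nf
    rw [h1]
    nlinarith [mul_le_mul_of_nonneg_left h2 e0.le]
  have h3 : Real.exp v ≤ Real.exp (a*v) := Real.exp_le_exp.2 (by nlinarith)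
  have h4 : (v/5)^(5:ℕ) ≤ Real.exp v := by
    have hh : Real.exp v = (Real.exp (v/5))^(5:ℕ) := by
      rw [← Real.exp_nat_mul]; ring_nf
    rw [hh]
    exact pow_le_pow_left₀ (by positivity) (by linarith [Real.add_one_le_exp (v/5)]) 5
  have s2 : 2*v^(4:ℕ) ≤ (b-a)*v*Real.exp (a*v) := by
    have t1 : (v/5)^(5:ℕ) ≤ Real.exp (a*v) := h4.trans h3
    have hba : (7/100:ℝ) ≤ b - a := by linarith
    have hbav : (7/100:ℝ)*v ≤ (b-a)*v := mul_le_mul_of_nonneg_right hba hv0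
    have t2 : (7/100) * v * ((v/5)^(5:ℕ)) ≤ (b-a)*v*Real.exp (a*v) := by
      apply mul_le_mul hbav t1 (by positivity)
      calc (0:ℝ) ≤ (7/100)*v := by positivity
      _ ≤ (b-a)*v := hbav
    have hv2 : (315844:ℝ) ≤ v^2 := by nlinarith
    have hv4p : (0:ℝ) ≤ v^4 := by positivity
    have t3 : 2*v^(4:ℕ) ≤ (7/100)*v*((v/5)^(5:ℕ)) := by
      have e : (7/100)*v*((v/5)^(5:ℕ)) = (7/312500)*(v^2*v^(4:ℕ)) := by ring
      rw [e]
      nlinarith [mul_le_mul_of_nonneg_right hv2 hv4p]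
    linarith
  linarith [s1, s2]

set_option maxHeartbeats 1000000 in
private lemma core {L s : ℝ} (hL : (10:ℝ)^11 ≤ L) (hs : 0 ≤ s) :
    Real.exp (s ^ ((1:ℝ)/4)) ≤ Real.exp ((2*L) ^ ((1:ℝ)/4)) - 2*L + Real.exp (s - L) / 2 := by
  have hL0 : (0:ℝ) < L := lt_of_lt_of_le (by norm_num) hL
  rcases le_or_gt s (3/2*L) with h | h
  · have h1 : s ^ ((1:ℝ)/4) ≤ (3/2*L) ^ ((1:ℝ)/4) :=
      Real.rpow_le_rpow hs h (by norm_num)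
    have h2 := KI hL
    have h3 := Real.exp_le_exp.2 h1
    have h4 : (0:ℝ) ≤ Real.exp (s-L) / 2 := by positivity
    linarith
  · have hs1 : (1:ℝ) ≤ s := by nlinarith
    have hsL : L/2 ≤ s - L := by linarith
    -- 2L ≤ exp(s-L)/4
    have e1 : L/4 ≤ Real.exp (L/4) := by linarith [Real.add_one_le_exp (L/4)]
    have e2 : (L/4)^2 ≤ Real.exp (L/2) := by
      have hh : Real.exp (L/2) = (Real.exp (L/4))^(2:ℕ) := by
        rw [← Real.exp_nat_mul]; ring_nf
      rw [hh]
      exact pow_le_pow_left₀ (by positivity) e1 2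
    have e3 : 2*L ≤ Real.exp (s-L)/4 := by
      have hmono : Real.exp (L/2) ≤ Real.exp (s-L) := Real.exp_le_exp.2 hsL
      nlinarith
    -- exp(s^{1/4}) ≤ exp(s-L)/4
    have q1 : s ^ ((1:ℝ)/4) ≤ Real.sqrt s := by
      have h1 : s ^ ((1:ℝ)/4) ≤ s ^ ((1:ℝ)/2) :=
        Real.rpow_le_rpow_of_exponent_le hs1 (by norm_num)
      rw [Real.sqrt_eq_rpow]
      exact h1
    have hw0 : 0 ≤ Real.sqrt s := Real.sqrt_nonneg s
    have hwsq : Real.sqrt s ^ 2 = s := Real.sq_sqrt hs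
    have hw9 : (9:ℝ) ≤ Real.sqrt s := by nlinarith
    have q2 : Real.sqrt s ≤ s - L - 2 := by nlinarith
    have q3 : Real.exp (s ^ ((1:ℝ)/4)) ≤ Real.exp (s - L - 2) :=
      Real.exp_le_exp.2 (q1.trans q2)
    have q4 : Real.exp (s - L - 2) ≤ Real.exp (s-L)/4 := by
      have hsplit : Real.exp (s-L-2) = Real.exp (s-L) * Real.exp (-2:ℝ) := by
        rw [← Real.exp_add]; ring_nf
      have hexp2 : (4:ℝ) ≤ Real.exp 2 := by
        have h1 : (2.7182818283:ℝ) < Real.exp 1 := Real.exp_one_gt_d9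
        have h2 : Real.exp 2 = Real.exp 1 * Real.exp 1 := by
          rw [← Real.exp_add]; norm_num
        nlinarith
      have hneg : Real.exp (-2:ℝ) ≤ 1/4 := by
        rw [Real.exp_neg]
        rw [inv_le_comm₀ (Real.exp_pos 2) (by norm_num)]
        · linarith
      rw [hsplit]
      have := mul_le_mul_of_nonneg_left hneg (Real.exp_nonneg (s-L))
      linarith
    have hpos : (0:ℝ) < Real.exp ((2*L)^((1:ℝ)/4)) := Real.exp_pos _
    linarith

set_option maxHeartbeats 1000000 in
private lemma sharp (p : ℝ) (hp : 0 < p) (hps : p ≤ Real.exp (-(10^11:ℝ))) (k : ℕ) :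
    ginv ((k:ℝ)+1) * (1-p)^(k+1) ≤
      (p^2 * ginv (1/p^2)) * (Real.exp (-(p/2)))^(k+1) := by
  set t : ℝ := (k:ℝ)+1 with htdef
  have ht1 : (1:ℝ) ≤ t := by
    have : (0:ℝ) ≤ (k:ℝ) := Nat.cast_nonneg k
    simp only [htdef]; linarith
  have ht0 : (0:ℝ) < t := by linarith
  have hp1 : p < 1 := lt_of_le_of_lt hps (by
    have : (-(10^11:ℝ)) < 0 := by norm_num
    calc Real.exp (-(10^11:ℝ)) < Real.exp 0 := Real.exp_lt_exp.2 this
    _ = 1 := Real.exp_zero)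
  set L : ℝ := -Real.log p with hLdef
  have hL : (10:ℝ)^11 ≤ L := by
    have h1 : Real.log p ≤ Real.log (Real.exp (-(10^11:ℝ))) := Real.log_le_log hp hps
    rw [Real.log_exp] at h1
    simp only [hLdef]
    linarith
  set s : ℝ := Real.log t with hsdef
  have hs0 : 0 ≤ s := Real.log_nonneg ht1
  have hcore := core hL hs0
  have hpt : p * t = Real.exp (s - L) := by
    have : s - L = Real.log t + Real.log p := by simp only [hsdef, hLdef]; ring
    rw [this, Real.exp_add, Real.exp_log ht0, Real.exp_log hp]
    ring
  have hlogsq : Real.log (1/p^2) = 2*L := by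
    rw [one_div, Real.log_inv, Real.log_pow]
    simp only [hLdef]
    push_cast
    ring
  have hg2 : ginv (1/p^2) = Real.exp (Real.exp ((2*L) ^ ((1:ℝ)/4))) := by
    unfold ginv
    rw [hlogsq]
  have hp2 : p^2 = Real.exp (-(2*L)) := by
    have h1 : -(2*L) = Real.log p + Real.log p := by simp only [hLdef]; ring
    rw [h1, Real.exp_add, Real.exp_log hp]
    ring
  have hgt : ginv t ≤ Real.exp (Real.exp ((2*L) ^ ((1:ℝ)/4)) - 2*L + p*t/2) := by
    unfold ginv
    apply Real.exp_le_exp.2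
    rw [hpt]
    exact hcore
  have hpow : (1-p)^(k+1) ≤ Real.exp (-(p*t)) := pow_one_sub_le hp.le hp1.le k
  calc ginv t * (1-p)^(k+1)
      ≤ Real.exp (Real.exp ((2*L) ^ ((1:ℝ)/4)) - 2*L + p*t/2) * Real.exp (-(p*t)) :=
        mul_le_mul hgt hpow (pow_nonneg (by linarith) _) (Real.exp_nonneg _)
  _ = (p^2 * ginv (1/p^2)) * (Real.exp (-(p/2)))^(k+1) := by
      rw [hg2, hp2, ← Real.exp_nat_mul, ← Real.exp_add, ← Real.exp_add, ← Real.exp_add]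
      congr 1
      simp only [htdef]
      push_cast
      ring

private lemma sum_bd (p b : ℝ) (hp : 0 < p) (hp1 : p < 1) (hb : 0 ≤ b)
    (f : ℕ → ℝ) (hf0 : ∀ k, 0 ≤ f k)
    (hfb : ∀ k, f k ≤ b * (Real.exp (-(p/2)))^(k+1)) :
    Summable f ∧ (∑' k, f k) ≤ b * (4/p) := by
  set r := Real.exp (-(p/2)) with hrdef
  have hr0 : (0:ℝ) < r := Real.exp_pos _
  have hr1 : r < 1 := by
    simp only [hrdef]
    calc Real.exp (-(p/2)) < Real.exp 0 := Real.exp_lt_exp.2 (by linarith)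
    _ = 1 := Real.exp_zero
  have hgsum : Summable (fun k : ℕ => b * r^(k+1)) := by
    have h := (summable_geometric_of_lt_one hr0.le hr1).mul_left (b*r)
    exact h.congr (fun k => by rw [pow_succ]; ring)
  have hsf : Summable f := Summable.of_nonneg_of_le hf0 hfb hgsum
  refine ⟨hsf, ?_⟩
  have h1 : (∑' k, f k) ≤ ∑' k : ℕ, b * r^(k+1) := hsf.tsum_le_tsum hfb hgsum
  have h2 : (∑' k : ℕ, b * r^(k+1)) = (b*r) * (1-r)⁻¹ := by
    calc (∑' k : ℕ, b * r^(k+1)) = ∑' k : ℕ, (b*r)*r^k :=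
          tsum_congr (fun k => by rw [pow_succ]; ring)
    _ = (b*r) * ∑' k : ℕ, r^k := tsum_mul_left
    _ = (b*r)*(1-r)⁻¹ := by rw [tsum_geometric_of_lt_one hr0.le hr1]
  have key : r*(1+p/2) ≤ 1 := by
    have hxe : 1 + p/2 ≤ Real.exp (p/2) := by linarith [Real.add_one_le_exp (p/2)]
    have hre : r * Real.exp (p/2) = 1 := by
      rw [hrdef, ← Real.exp_add]
      norm_num
    nlinarith [mul_le_mul_of_nonneg_left hxe hr0.le]
  have hquarter : p/4 ≤ 1 - r := by nlinarith
  have h1r : (0:ℝ) < 1 - r := by linarith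
  have hinv : (1-r)⁻¹ ≤ 4/p := by
    rw [inv_le_comm₀ h1r (by positivity), inv_div]
    exact hquarter
  calc (∑' k, f k) ≤ (b*r)*(1-r)⁻¹ := h1.trans_eq h2
  _ ≤ b * (4/p) := by
      have c1 : b*r*(1-r)⁻¹ ≤ b*1*(1-r)⁻¹ :=
        mul_le_mul_of_nonneg_right (mul_le_mul_of_nonneg_left hr1.le hb) (by positivity)
      have c2 : b * (1-r)⁻¹ ≤ b * (4/p) := mul_le_mul_of_nonneg_left hinv hb
      calc b*r*(1-r)⁻¹ ≤ b*1*(1-r)⁻¹ := c1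
      _ = b * (1-r)⁻¹ := by ring
      _ ≤ b * (4/p) := c2

/-- The geometric-weighted sum `Σ_{k≥1} ginv(k)·(1-p)^k` is `O(ginv(p⁻²))`,
uniformly over `p ∈ (0,1)`. -/
theorem geometric_sum_ginv_bound :
    ∃ C : ℝ, 0 < C ∧ ∀ p : ℝ, 0 < p → p < 1 →
      (Summable fun k : ℕ => ginv ((k : ℝ) + 1) * (1 - p) ^ (k + 1)) ∧
      (∑' k : ℕ, ginv ((k : ℝ) + 1) * (1 - p) ^ (k + 1)) ≤ C * ginv (1 / p ^ 2) := by
  set p₀ : ℝ := Real.exp (-(10^11:ℝ)) with hp₀def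
  have hp₀0 : (0:ℝ) < p₀ := Real.exp_pos _
  set C : ℝ := Real.exp ((Real.exp 1)^2/(2*p₀)) * (4/p₀) + 4 with hCdef
  have hC4 : (4:ℝ) ≤ C := by
    have : (0:ℝ) ≤ Real.exp ((Real.exp 1)^2/(2*p₀)) * (4/p₀) := by positivity
    simp only [hCdef]; linarith
  refine ⟨C, by linarith, ?_⟩
  intro p hp hp1
  have hf0 : ∀ k : ℕ, 0 ≤ ginv ((k:ℝ)+1) * (1-p)^(k+1) :=
    fun k => mul_nonneg (Real.exp_nonneg _) (pow_nonneg (by linarith) _)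
  have hg1 : (1:ℝ) ≤ ginv (1/p^2) := by
    unfold ginv
    calc (1:ℝ) = Real.exp 0 := Real.exp_zero.symm
    _ ≤ _ := Real.exp_le_exp.2 (Real.exp_nonneg _)
  have hg0 : (0:ℝ) ≤ ginv (1/p^2) := by linarith
  rcases le_or_gt p p₀ with hcase | hcase
  · obtain ⟨hs, hb⟩ := sum_bd p (p^2 * ginv (1/p^2)) hp hp1
      (by positivity) _ hf0 (fun k => sharp p hp hcase k)
    refine ⟨hs, hb.trans ?_⟩
    have heq : p^2 * ginv (1/p^2) * (4/p) = 4*p*ginv (1/p^2) := by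
      field_simp
    rw [heq]
    have h4p : 4*p ≤ C := by linarith
    exact mul_le_mul_of_nonneg_right h4p hg0
  · obtain ⟨hs, hb⟩ := sum_bd p (Real.exp ((Real.exp 1)^2/(2*p))) hp hp1
      (Real.exp_nonneg _) _ hf0 (fun k => crude p hp hp1 k)
    refine ⟨hs, hb.trans ?_⟩
    have hA : Real.exp ((Real.exp 1)^2/(2*p)) ≤ Real.exp ((Real.exp 1)^2/(2*p₀)) := by
      apply Real.exp_le_exp.2
      apply div_le_div_of_nonneg_left (by positivity) (by linarith) (by linarith)
    have hB : 4/p ≤ 4/p₀ := by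
      apply div_le_div_of_nonneg_left (by norm_num) hp₀0 hcase.le
    have hprod : Real.exp ((Real.exp 1)^2/(2*p)) * (4/p) ≤
        Real.exp ((Real.exp 1)^2/(2*p₀)) * (4/p₀) := by
      apply mul_le_mul hA hB (by positivity) (Real.exp_nonneg _)
    have hCg : Real.exp ((Real.exp 1)^2/(2*p₀)) * (4/p₀) ≤ C * ginv (1/p^2) := by
      have h1 : Real.exp ((Real.exp 1)^2/(2*p₀)) * (4/p₀) = C - 4 := by
        simp only [hCdef]; ring
      have h2 : C - 4 ≤ (C-4) * ginv (1/p^2) :=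
        le_mul_of_one_le_right (by linarith) hg1
      have h3 : (C-4) * ginv (1/p^2) ≤ C * ginv (1/p^2) :=
        mul_le_mul_of_nonneg_right (by linarith) hg0
      linarith
    linarith
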